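/- Let λ be a d-composition, B an ordinary symbol of λ, and β_1 < β_2 two entries of the shifted symbol B[m]'. Form μ by adding l nodes to the part corresponding to β_1 and ν by adding l nodes to the part corresponding to β_2. Then ν ≺ μ, where ≺ compares the symbol-statistic S(·) = Σ_{0≤i≤j<d, (a,b)∈B'^(i)×B'^(j), a>b if i=j} min{a,b} − Σ_{0≤i,j<d, a∈B'^(i), 1≤t≤a} min{t, m^(j)} computed on symbols of equal height. In particular, if μ and ν are d-partitions then a(μ) > a(ν). -/

import Mathlib

open Finset

/-- The shifted symbol entry `B'^(i)_j = λ^(i)_j − (j+1) + h + m^(i)`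
(rows indexed from `0`) of a `d`-composition, for a symbol of height `h`. -/
noncomputable def symb (h : ℕ) (m : ℕ → ℚ) (part : ℕ → ℕ → ℕ) (i j : ℕ) : ℚ :=
  (part i j : ℚ) - ((j : ℚ) + 1) + (h : ℚ) + m i

/-- The symbol statistic
`S(λ) = Σ_{i≤j, (a,b)∈B'^(i)×B'^(j), a>b if i=j} min{a,b}
      − Σ_{i,j, a∈B'^(i), 1≤t≤a} min{t, m^(j)}`
computed on (shifted) symbols of height `h`. -/
noncomputable def Sstat (d h : ℕ) (m : ℕ → ℚ) (part : ℕ → ℕ → ℕ) : ℚ :=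
  (∑ i ∈ range d, ∑ j ∈ range d, ∑ r ∈ range h, ∑ s ∈ range h,
    if i < j ∨ (i = j ∧ r < s)
      then min (symb h m part i r) (symb h m part j s) else 0)
  - ∑ i ∈ range d, ∑ j ∈ range d, ∑ r ∈ range h,
      ∑ t ∈ Finset.Icc 1 (Int.toNat ⌊symb h m part i r⌋), min (t : ℚ) (m j)

/-- let `λ` be a `d`-composition with symbol of height `h`, and
`β₁ < β₂` two entries of the shifted symbol `B[m]'`, at positions `(i₁,j₁)`
and `(i₂,j₂)`.  Adding `l ≥ 1` nodes to the part of `β₁` gives `μ`; adding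
`l` nodes to the part of `β₂` gives `ν`.  Then `ν ≺ μ`, i.e.
`S(ν) < S(μ)`; in particular, since the `a`-function differs from `S` by a
quantity depending only on `(n,h,m)`, if `μ` and `ν` are `d`-partitions then
`a(ν) < a(μ)`. -/
lemma Sstat_eq (d h : ℕ) (m : ℕ → ℚ) (π : ℕ → ℕ → ℕ) :
    Sstat d h m π =
      (∑ p ∈ range d ×ˢ range h, ∑ q ∈ range d ×ˢ range h,
        if p.1 < q.1 ∨ (p.1 = q.1 ∧ p.2 < q.2)
          then min (symb h m π p.1 p.2) (symb h m π q.1 q.2) else 0)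
      - ∑ p ∈ range d ×ˢ range h, ∑ j ∈ range d,
          ∑ t ∈ Finset.Icc 1 (Int.toNat ⌊symb h m π p.1 p.2⌋), min (t : ℚ) (m j) := by
  unfold Sstat
  congr 1
  · simp only [Finset.sum_product]
    exact Finset.sum_congr rfl fun i _ => Finset.sum_comm
  · simp only [Finset.sum_product]
    exact Finset.sum_congr rfl fun i _ => Finset.sum_comm

lemma cond_cases {p q : ℕ × ℕ} (h : p ≠ q) :
    ((p.1 < q.1 ∨ (p.1 = q.1 ∧ p.2 < q.2)) ∧ ¬(q.1 < p.1 ∨ (q.1 = p.1 ∧ q.2 < p.2))) ∨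
    ((q.1 < p.1 ∨ (q.1 = p.1 ∧ q.2 < p.2)) ∧ ¬(p.1 < q.1 ∨ (p.1 = q.1 ∧ p.2 < q.2))) := by
  rcases p with ⟨a, b⟩; rcases q with ⟨c, e⟩
  simp only [Ne, Prod.mk.injEq, not_and] at h
  simp only [not_or, not_and, not_lt]
  omega

lemma sum2_split {α : Type*} [DecidableEq α] (P : Finset α) {p₀ : α} (h : p₀ ∈ P) (G : α → α → ℚ) :
    ∑ p ∈ P, ∑ q ∈ P, G p q
      = G p₀ p₀ + (∑ q ∈ P.erase p₀, G p₀ q) + (∑ p ∈ P.erase p₀, G p p₀)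
        + ∑ p ∈ P.erase p₀, ∑ q ∈ P.erase p₀, G p q := by
  have h1 : ∀ f : α → ℚ, ∑ p ∈ P, f p = f p₀ + ∑ p ∈ P.erase p₀, f p :=
    fun f => (Finset.add_sum_erase P f h).symm
  rw [h1 (fun p => ∑ q ∈ P, G p q), h1 (G p₀),
    Finset.sum_congr rfl (fun p _ => h1 (G p)), Finset.sum_add_distrib]
  ring

lemma Sstat_bump (d h l : ℕ) (m : ℕ → ℚ) (π : ℕ → ℕ → ℕ)
    (i₀ j₀ : ℕ) (h₀ : (i₀, j₀) ∈ range d ×ˢ range h)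
    (hnn : 0 ≤ symb h m π i₀ j₀)
    (π' : ℕ → ℕ → ℕ) (hπ' : π' = fun c r => if c = i₀ ∧ r = j₀ then π c r + l else π c r) :
    Sstat d h m π' = Sstat d h m π
      + (∑ q ∈ (range d ×ˢ range h).erase (i₀, j₀),
          (min (symb h m π i₀ j₀ + (l : ℚ)) (symb h m π q.1 q.2)
            - min (symb h m π i₀ j₀) (symb h m π q.1 q.2)))
      - ∑ j ∈ range d,
          ∑ t ∈ Finset.Ioc (Int.toNat ⌊symb h m π i₀ j₀⌋) (Int.toNat ⌊symb h m π i₀ j₀⌋ + l),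
            min (t : ℚ) (m j) := by
  have hX' : ∀ i r : ℕ, symb h m π' i r
      = (if (i, r) = (i₀, j₀) then symb h m π i r + (l : ℚ) else symb h m π i r) := by
    intro i r
    subst hπ'
    simp only [symb, Prod.mk.injEq]
    split_ifs with hc
    · push_cast; ring
    · rfl
  rw [Sstat_eq, Sstat_eq]
  set P := range d ×ˢ range h with hP
  set p₀ : ℕ × ℕ := (i₀, j₀) with hp₀
  set X : ℕ × ℕ → ℚ := fun p => symb h m π p.1 p.2 with hXdef
  have hXq : ∀ q ∈ P.erase p₀, symb h m π' q.1 q.2 = X q := by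
    intro q hq
    rw [show symb h m π' q.1 q.2 = _ from hX' q.1 q.2]
    simp [Finset.ne_of_mem_erase hq, hXdef]
  have hXp₀ : symb h m π' i₀ j₀ = X p₀ + (l : ℚ) := by
    rw [show symb h m π' i₀ j₀ = _ from hX' i₀ j₀]; simp [hp₀, hXdef]
  -- T part
  have hT : (∑ p ∈ P, ∑ q ∈ P,
        if p.1 < q.1 ∨ (p.1 = q.1 ∧ p.2 < q.2)
          then min (symb h m π' p.1 p.2) (symb h m π' q.1 q.2) else 0)
      = (∑ p ∈ P, ∑ q ∈ P,
        if p.1 < q.1 ∨ (p.1 = q.1 ∧ p.2 < q.2) then min (X p) (X q) else 0)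
      + ∑ q ∈ P.erase p₀, (min (X p₀ + (l : ℚ)) (X q) - min (X p₀) (X q)) := by
    rw [sum2_split P h₀ (fun p q => if p.1 < q.1 ∨ (p.1 = q.1 ∧ p.2 < q.2)
          then min (symb h m π' p.1 p.2) (symb h m π' q.1 q.2) else 0),
        sum2_split P h₀ (fun p q => if p.1 < q.1 ∨ (p.1 = q.1 ∧ p.2 < q.2)
          then min (X p) (X q) else 0)]
    have hdiag : ∀ y : ℕ × ℕ → ℚ,
        (if p₀.1 < p₀.1 ∨ (p₀.1 = p₀.1 ∧ p₀.2 < p₀.2) then min (y p₀) (y p₀) else 0) = 0 := by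
      intro y; simp
    have hEE : (∑ p ∈ P.erase p₀, ∑ q ∈ P.erase p₀,
        if p.1 < q.1 ∨ (p.1 = q.1 ∧ p.2 < q.2)
          then min (symb h m π' p.1 p.2) (symb h m π' q.1 q.2) else 0)
        = ∑ p ∈ P.erase p₀, ∑ q ∈ P.erase p₀,
        if p.1 < q.1 ∨ (p.1 = q.1 ∧ p.2 < q.2) then min (X p) (X q) else 0 := by
      refine Finset.sum_congr rfl fun p hp => Finset.sum_congr rfl fun q hq => ?_
      rw [hXq p hp, hXq q hq]
    have hcross : (∑ q ∈ P.erase p₀,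
          if p₀.1 < q.1 ∨ (p₀.1 = q.1 ∧ p₀.2 < q.2)
            then min (symb h m π' p₀.1 p₀.2) (symb h m π' q.1 q.2) else 0)
        + (∑ p ∈ P.erase p₀,
          if p.1 < p₀.1 ∨ (p.1 = p₀.1 ∧ p.2 < p₀.2)
            then min (symb h m π' p.1 p.2) (symb h m π' p₀.1 p₀.2) else 0)
        = ((∑ q ∈ P.erase p₀,
            if p₀.1 < q.1 ∨ (p₀.1 = q.1 ∧ p₀.2 < q.2) then min (X p₀) (X q) else 0)
          + (∑ p ∈ P.erase p₀,
            if p.1 < p₀.1 ∨ (p.1 = p₀.1 ∧ p.2 < p₀.2) then min (X p) (X p₀) else 0))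
          + ∑ q ∈ P.erase p₀, (min (X p₀ + (l : ℚ)) (X q) - min (X p₀) (X q)) := by
      rw [← Finset.sum_add_distrib, ← Finset.sum_add_distrib, ← Finset.sum_add_distrib]
      refine Finset.sum_congr rfl fun q hq => ?_
      have hq' : q ≠ p₀ := Finset.ne_of_mem_erase hq
      have e1 : symb h m π' q.1 q.2 = X q := hXq q hq
      have e2 : symb h m π' p₀.1 p₀.2 = X p₀ + (l : ℚ) := hXp₀
      rcases cond_cases hq'.symm with ⟨h1, h2⟩ | ⟨h1, h2⟩
      · rw [if_pos h1, if_pos h1, if_neg h2, if_neg h2, e1, e2]; ring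
      · rw [if_neg h2, if_neg h2, if_pos h1, if_pos h1, e1, e2,
          min_comm (X q) (X p₀ + (l : ℚ)), min_comm (X q) (X p₀)]; ring
    linarith [hEE, hcross, hdiag (fun p => symb h m π' p.1 p.2), hdiag X]
  -- U part
  have hfl : Int.toNat ⌊X p₀ + (l : ℚ)⌋ = Int.toNat ⌊X p₀⌋ + l := by
    have h1 : ⌊X p₀ + (l : ℚ)⌋ = ⌊X p₀⌋ + (l : ℤ) := by
      exact_mod_cast Int.floor_add_natCast (X p₀) l
    have h2 : (0 : ℤ) ≤ ⌊X p₀⌋ := Int.floor_nonneg.mpr hnn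
    omega
  have hU : (∑ p ∈ P, ∑ j ∈ range d,
        ∑ t ∈ Finset.Icc 1 (Int.toNat ⌊symb h m π' p.1 p.2⌋), min (t : ℚ) (m j))
      = (∑ p ∈ P, ∑ j ∈ range d,
        ∑ t ∈ Finset.Icc 1 (Int.toNat ⌊X p⌋), min (t : ℚ) (m j))
      + ∑ j ∈ range d,
          ∑ t ∈ Finset.Ioc (Int.toNat ⌊X p₀⌋) (Int.toNat ⌊X p₀⌋ + l), min (t : ℚ) (m j) := by
    rw [← Finset.add_sum_erase P _ h₀, ← Finset.add_sum_erase P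
      (fun p => ∑ j ∈ range d, ∑ t ∈ Finset.Icc 1 (Int.toNat ⌊X p⌋), min (t : ℚ) (m j)) h₀]
    have hrest : (∑ p ∈ P.erase p₀, ∑ j ∈ range d,
        ∑ t ∈ Finset.Icc 1 (Int.toNat ⌊symb h m π' p.1 p.2⌋), min (t : ℚ) (m j))
        = ∑ p ∈ P.erase p₀, ∑ j ∈ range d,
        ∑ t ∈ Finset.Icc 1 (Int.toNat ⌊X p⌋), min (t : ℚ) (m j) := by
      refine Finset.sum_congr rfl fun p hp => ?_
      rw [hXq p hp]
    have hp₀term : (∑ j ∈ range d,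
        ∑ t ∈ Finset.Icc 1 (Int.toNat ⌊symb h m π' p₀.1 p₀.2⌋), min (t : ℚ) (m j))
        = (∑ j ∈ range d, ∑ t ∈ Finset.Icc 1 (Int.toNat ⌊X p₀⌋), min (t : ℚ) (m j))
        + ∑ j ∈ range d,
            ∑ t ∈ Finset.Ioc (Int.toNat ⌊X p₀⌋) (Int.toNat ⌊X p₀⌋ + l), min (t : ℚ) (m j) := by
      rw [← Finset.sum_add_distrib]
      refine Finset.sum_congr rfl fun j _ => ?_
      rw [hXp₀, hfl]
      have e3 : ∀ n : ℕ, Finset.Icc 1 n = Finset.Ioc 0 n := by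
        intro n; ext t; simp only [Finset.mem_Icc, Finset.mem_Ioc]; omega
      rw [e3, e3]
      exact (Finset.sum_Ioc_consecutive _ (Nat.zero_le _) (Nat.le_add_right _ _)).symm
    rw [hrest, hp₀term]
    ring
  rw [hT, hU]
  ring

lemma phi_mono {l a b x : ℚ} (hl : 0 ≤ l) (hab : a ≤ b) :
    min (b + l) x - min b x ≤ min (a + l) x - min a x := by
  simp only [min_def]; split_ifs <;> linarith

lemma sum_Ioc_min_mono (l : ℕ) (c : ℚ) {a b : ℕ} (hab : a ≤ b) :
    ∑ t ∈ Finset.Ioc a (a + l), min (t : ℚ) c ≤ ∑ t ∈ Finset.Ioc b (b + l), min (t : ℚ) c := by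
  have e1 : ∀ n : ℕ, Finset.Ioc n (n + l) = Finset.Ico (n + 1) (n + 1 + l) := by
    intro n; ext t; simp only [Finset.mem_Ioc, Finset.mem_Ico]; omega
  rw [e1, e1, Finset.sum_Ico_eq_sum_range, Finset.sum_Ico_eq_sum_range]
  simp only [show ∀ n : ℕ, n + 1 + l - (n + 1) = l from fun n => by omega]
  refine Finset.sum_le_sum fun i _ => min_le_min ?_ le_rfl
  exact Nat.cast_le.mpr (by omega)

theorem stmt10 (d h l : ℕ) (hl : 0 < l) (m : ℕ → ℚ) (hm : ∀ j, 0 ≤ m j)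
    (part : ℕ → ℕ → ℕ) (hht : ∀ c r, h ≤ r → part c r = 0)
    (i₁ j₁ i₂ j₂ : ℕ) (hi₁ : i₁ < d) (hi₂ : i₂ < d) (hj₁ : j₁ < h) (hj₂ : j₂ < h)
    (hne : (i₁, j₁) ≠ (i₂, j₂))
    (hlt : symb h m part i₁ j₁ < symb h m part i₂ j₂)
    (μ ν : ℕ → ℕ → ℕ)
    (hμ : μ = fun c r => if c = i₁ ∧ r = j₁ then part c r + l else part c r)
    (hν : ν = fun c r => if c = i₂ ∧ r = j₂ then part c r + l else part c r) :
    Sstat d h m ν < Sstat d h m μ := by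
  have hmem₁ : (i₁, j₁) ∈ range d ×ˢ range h := by
    simp [Finset.mem_product, hi₁, hj₁]
  have hmem₂ : (i₂, j₂) ∈ range d ×ˢ range h := by
    simp [Finset.mem_product, hi₂, hj₂]
  have hnn : ∀ i r : ℕ, r < h → 0 ≤ symb h m part i r := by
    intro i r hr
    have h1 : ((r : ℚ) + 1) ≤ (h : ℚ) := by exact_mod_cast hr
    have h2 := hm i
    have h3 : (0 : ℚ) ≤ (part i r : ℚ) := Nat.cast_nonneg _
    simp only [symb]; linarith
  rw [Sstat_bump d h l m part i₁ j₁ hmem₁ (hnn _ _ hj₁) μ hμ,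
      Sstat_bump d h l m part i₂ j₂ hmem₂ (hnn _ _ hj₂) ν hν]
  set P := range d ×ˢ range h with hPdef
  set β₁ := symb h m part i₁ j₁ with hb1
  set β₂ := symb h m part i₂ j₂ with hb2
  have hab : Int.toNat ⌊β₁⌋ ≤ Int.toNat ⌊β₂⌋ := by
    have := Int.floor_le_floor (le_of_lt hlt); omega
  have hB : (∑ j ∈ range d, ∑ t ∈ Finset.Ioc (Int.toNat ⌊β₁⌋) (Int.toNat ⌊β₁⌋ + l),
        min (t : ℚ) (m j))
      ≤ ∑ j ∈ range d, ∑ t ∈ Finset.Ioc (Int.toNat ⌊β₂⌋) (Int.toNat ⌊β₂⌋ + l),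
        min (t : ℚ) (m j) :=
    Finset.sum_le_sum fun j _ => sum_Ioc_min_mono l (m j) hab
  have hp₂ : (i₂, j₂) ∈ P.erase (i₁, j₁) := Finset.mem_erase.mpr ⟨Ne.symm hne, hmem₂⟩
  have hp₁ : (i₁, j₁) ∈ P.erase (i₂, j₂) := Finset.mem_erase.mpr ⟨hne, hmem₁⟩
  rw [← Finset.add_sum_erase _ _ hp₂, ← Finset.add_sum_erase _ _ hp₁]
  have herase : (P.erase (i₂, j₂)).erase (i₁, j₁) = (P.erase (i₁, j₁)).erase (i₂, j₂) := by
    ext q; simp only [Finset.mem_erase]; tauto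
  rw [herase]
  have hl1 : (1 : ℚ) ≤ (l : ℚ) := by exact_mod_cast hl
  have hsum : (∑ q ∈ (P.erase (i₁, j₁)).erase (i₂, j₂),
        (min (β₂ + (l : ℚ)) (symb h m part q.1 q.2) - min β₂ (symb h m part q.1 q.2)))
      ≤ ∑ q ∈ (P.erase (i₁, j₁)).erase (i₂, j₂),
        (min (β₁ + (l : ℚ)) (symb h m part q.1 q.2) - min β₁ (symb h m part q.1 q.2)) :=
    Finset.sum_le_sum fun q _ => phi_mono (by linarith) (le_of_lt hlt)
  have e1 : symb h m part ((i₂, j₂) : ℕ × ℕ).1 ((i₂, j₂) : ℕ × ℕ).2 = β₂ := rfl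
  have e2 : symb h m part ((i₁, j₁) : ℕ × ℕ).1 ((i₁, j₁) : ℕ × ℕ).2 = β₁ := rfl
  have t1 : min (β₁ + (l : ℚ)) β₂ - min β₁ β₂ > 0 := by
    rw [min_eq_left (le_of_lt hlt)]
    have : β₁ < min (β₁ + (l : ℚ)) β₂ := lt_min (by linarith) hlt
    linarith
  have t2 : min (β₂ + (l : ℚ)) β₁ - min β₂ β₁ = 0 := by
    rw [min_eq_right (le_of_lt hlt), min_eq_right (by linarith)]
    ring
  rw [e1, e2]
  linarith
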